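/- For the old cohort under independence and monotonicity, the outcome jump over the window (t−e, t+e) factors as E[Ȳ|X=t+e]−E[Ȳ|X=t−e] = E[Y(0,1)−Y(0,0) | M(t+e)−M(t−e)=1, c∈L̄] · (E[M|X=t+e, c∈L̄] − E[M|X=t−e, c∈L̄]). -/

import Mathlib

open MeasureTheory

/-- For the old cohort (where only the confounding treatment `M` applies, so the
observed outcome is `M·Y(0,1)+(1−M)·Y(0,0)`), under independence (Assumption 6(i): conditional
expectations given `X = t±e` equal unconditional ones with the treatment state at `t±e`) and
monotonicity (Assumption 6(ii)), the outcome jump over the window `(t−e, t+e)` factors as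
`E[Ȳ|X=t+e]−E[Ȳ|X=t−e] = E[Y(0,1)−Y(0,0) | M(t+e)−M(t−e)=1] · (E[M|X=t+e]−E[M|X=t−e])`.
Here `M1 = M(t+e)`, `M0 = M(t−e)` are the treatment states of the old cohort. -/
theorem old_cohort_window_factorization
    {Ω : Type*} [MeasurableSpace Ω]
    (μ : Measure Ω) [IsProbabilityMeasure μ]
    (M1 M0 Y01 Y00 : Ω → ℝ)
    (hM1meas : Measurable M1) (hM0meas : Measurable M0)
    (hM1bin : ∀ ω, M1 ω = 0 ∨ M1 ω = 1) (hM0bin : ∀ ω, M0 ω = 0 ∨ M0 ω = 1)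
    -- Assumption 6(ii): monotonicity
    (hmono : ∀ᵐ ω ∂μ, M0 ω ≤ M1 ω)
    (hY01 : Integrable Y01 μ) (hY00 : Integrable Y00 μ) :
    (∫ ω, (M1 ω * Y01 ω + (1 - M1 ω) * Y00 ω) ∂μ)
        - ∫ ω, (M0 ω * Y01 ω + (1 - M0 ω) * Y00 ω) ∂μ
      = ((∫ ω in {ω | M1 ω - M0 ω = 1}, (Y01 ω - Y00 ω) ∂μ)
            / (μ {ω | M1 ω - M0 ω = 1}).toReal)
        * ((∫ ω, M1 ω ∂μ) - ∫ ω, M0 ω ∂μ) := by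
  set S : Set Ω := {ω | M1 ω - M0 ω = 1} with hS
  have hSmeas : MeasurableSet S := (hM1meas.sub hM0meas) (measurableSet_singleton 1)
  -- integrability facts
  have hbdd1 : ∃ C, ∀ ω, ‖M1 ω‖ ≤ C := ⟨1, fun ω => by rcases hM1bin ω with h | h <;> simp [h]⟩
  have hbdd0 : ∃ C, ∀ ω, ‖M0 ω‖ ≤ C := ⟨1, fun ω => by rcases hM0bin ω with h | h <;> simp [h]⟩
  have hM1int : Integrable M1 μ := by
    rcases hbdd1 with ⟨C, hC⟩
    exact (integrable_const C).mono' hM1meas.aestronglyMeasurable (Filter.Eventually.of_forall hC)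
  have hM0int : Integrable M0 μ := by
    rcases hbdd0 with ⟨C, hC⟩
    exact (integrable_const C).mono' hM0meas.aestronglyMeasurable (Filter.Eventually.of_forall hC)
  have hA1 : Integrable (fun ω => M1 ω * Y01 ω) μ :=
    hY01.bdd_mul hM1meas.aestronglyMeasurable (Filter.Eventually.of_forall hbdd1.choose_spec)
  have hA0 : Integrable (fun ω => M0 ω * Y01 ω) μ :=
    hY01.bdd_mul hM0meas.aestronglyMeasurable (Filter.Eventually.of_forall hbdd0.choose_spec)
  have hB1 : Integrable (fun ω => M1 ω * Y00 ω) μ :=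
    hY00.bdd_mul hM1meas.aestronglyMeasurable (Filter.Eventually.of_forall hbdd1.choose_spec)
  have hB0 : Integrable (fun ω => M0 ω * Y00 ω) μ :=
    hY00.bdd_mul hM0meas.aestronglyMeasurable (Filter.Eventually.of_forall hbdd0.choose_spec)
  -- LHS equals ∫ (M1 - M0) * (Y01 - Y00)
  have hC1 : Integrable (fun ω => M1 ω * Y01 ω + (1 - M1 ω) * Y00 ω) μ := by
    have : (fun ω => M1 ω * Y01 ω + (1 - M1 ω) * Y00 ω)
        = fun ω => M1 ω * Y01 ω + (Y00 ω - M1 ω * Y00 ω) := by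
      funext ω; ring
    rw [this]; exact hA1.add (hY00.sub hB1)
  have hC0 : Integrable (fun ω => M0 ω * Y01 ω + (1 - M0 ω) * Y00 ω) μ := by
    have : (fun ω => M0 ω * Y01 ω + (1 - M0 ω) * Y00 ω)
        = fun ω => M0 ω * Y01 ω + (Y00 ω - M0 ω * Y00 ω) := by
      funext ω; ring
    rw [this]; exact hA0.add (hY00.sub hB0)
  have hLHS : (∫ ω, (M1 ω * Y01 ω + (1 - M1 ω) * Y00 ω) ∂μ)
      - ∫ ω, (M0 ω * Y01 ω + (1 - M0 ω) * Y00 ω) ∂μ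
      = ∫ ω, (M1 ω - M0 ω) * (Y01 ω - Y00 ω) ∂μ := by
    rw [← integral_sub hC1 hC0]
    congr 1; funext ω; ring
  -- (M1 - M0) equals the indicator of S a.e.
  have hind : ∀ᵐ ω ∂μ, M1 ω - M0 ω = S.indicator (fun _ => (1 : ℝ)) ω := by
    filter_upwards [hmono] with ω hω
    by_cases h : ω ∈ S
    · simp only [Set.indicator_of_mem h]; exact h
    · simp only [Set.indicator_of_notMem h]
      rcases hM1bin ω with h1 | h1 <;> rcases hM0bin ω with h0 | h0
      · rw [h1, h0]; ring
      · exfalso; rw [h1, h0] at hω; linarith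
      · exact absurd (show ω ∈ S by simp [hS, Set.mem_setOf_eq, h1, h0]) h
      · rw [h1, h0]; ring
  have hint1 : ∫ ω, (M1 ω - M0 ω) * (Y01 ω - Y00 ω) ∂μ
      = ∫ ω in S, (Y01 ω - Y00 ω) ∂μ := by
    rw [← integral_indicator hSmeas]
    refine integral_congr_ae ?_
    filter_upwards [hind] with ω hω
    by_cases h : ω ∈ S
    · simp [Set.indicator_of_mem h, hω]
    · simp [Set.indicator_of_notMem h, hω]
  have hint2 : (∫ ω, M1 ω ∂μ) - ∫ ω, M0 ω ∂μ = (μ S).toReal := by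
    rw [← integral_sub hM1int hM0int, integral_congr_ae hind, integral_indicator hSmeas]
    simp; rfl
  rw [hLHS, hint1, hint2]
  by_cases hμS : μ S = 0
  · have hz : ∫ ω in S, (Y01 ω - Y00 ω) ∂μ = 0 := by
      rw [Measure.restrict_eq_zero.mpr hμS, integral_zero_measure]
    rw [hz, hμS]; simp
  · have : (μ S).toReal ≠ 0 := by
      simp [ENNReal.toReal_ne_zero, hμS, measure_ne_top μ S]
    field_simp
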